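/- The theory SAPP is not finitely axiomatizable: there is no finite set Γ of L-sentences such that for every L-structure M, M ⊨ Γ if and only if M ⊨ SAPP. -/

import Mathlib

open FirstOrder Language Structure BoundedFormula

/-- The relation symbols of the language `L`: a single binary relation `O`. -/
inductive PerpRel : ℕ → Type
  | o : PerpRel 2

/-- The first-order language with a single binary relation symbol `O`. -/
def L : Language := ⟨fun _ => Empty, PerpRel⟩
  deriving IsRelational

/-- The binary relation symbol `O` of `L`. -/
abbrev oSym : L.Relations 2 := .o

/-- `O(xᵢ, xⱼ)` as a bounded formula. -/
def oBF {n : ℕ} (i j : Fin n) : L.BoundedFormula Empty n :=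
  oSym.boundedFormula₂ (&i) (&j)

/-- Finite conjunction of a list of bounded formulas. -/
def andAll {n : ℕ} : List (L.BoundedFormula Empty n) → L.BoundedFormula Empty n
  | [] => ⊤
  | φ :: l => φ ⊓ andAll l

/-- λ₁ₙ : ∀y₁…∀yₙ∀s(O(s,y₁) ∧ … ∧ O(s,yₙ) → ∃t(t ≠ y₁ ∧ … ∧ t ≠ yₙ ∧ O(s,t))).
Variables: y₁,…,yₙ are de Bruijn indices 0,…,n-1, s is index n, t is index n+1. -/
def lam1 (n : ℕ) : L.Sentence :=
  ((andAll ((List.finRange n).map fun i => oBF (Fin.last n) i.castSucc)).imp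
    ((andAll ((List.finRange n).map fun i =>
        ∼((&(Fin.last (n + 1))) =' (&(i.castSucc.castSucc)))) ⊓
      oBF ((Fin.last n).castSucc) (Fin.last (n + 1))).ex)).alls

/-- λ₂ₙ : ∀y₁…∀yₙ∃s(¬O(s,y₁) ∧ … ∧ ¬O(s,yₙ)).
Variables: y₁,…,yₙ are de Bruijn indices 0,…,n-1, s is index n. -/
def lam2 (n : ℕ) : L.Sentence :=
  ((andAll ((List.finRange n).map fun i => ∼(oBF (Fin.last n) i.castSucc))).ex).alls

/-- λ₃ : ∀x ¬O(x,x). -/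
def lam3 : L.Sentence := (∼(oBF (0 : Fin 1) 0)).alls

/-- λ₄ : ∀x∀y(O(x,y) → O(y,x)). -/
def lam4 : L.Sentence := ((oBF (0 : Fin 2) 1).imp (oBF (1 : Fin 2) 0)).alls

/-- λ₅ : ∀x∃y O(x,y). -/
def lam5 : L.Sentence := ((oBF (0 : Fin 2) 1).ex).alls

/-- λ₆ : ∀x∀y∀z∀t(O(x,z) ∧ O(y,z) ∧ O(x,t) → O(y,t)). -/
def lam6 : L.Sentence :=
  ((oBF (0 : Fin 4) 2 ⊓ oBF (1 : Fin 4) 2 ⊓ oBF (0 : Fin 4) 3).imp (oBF (1 : Fin 4) 3)).alls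

/-- The theory SAPP. -/
def SAPP : L.Theory :=
  {φ | ∃ n, 1 ≤ n ∧ φ = lam1 n} ∪ {φ | ∃ n, 2 ≤ n ∧ φ = lam2 n} ∪ {lam3, lam4, lam5, lam6}

/-- SAPP is not finitely axiomatizable: no finite set Γ of L-sentences has
exactly the same models as SAPP. -/
-- Auxiliary: counterexample structures
def ModK (K : ℕ) : Type := Fin (K+1) × Bool × ℕ

def orel {K : ℕ} (x y : ModK K) : Prop := x.1 = y.1 ∧ x.2.1 ≠ y.2.1

instance instModK (K : ℕ) : L.Structure (ModK K) where
  funMap := fun f _ => f.elim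
  RelMap := fun r x => match r with | .o => orel (x 0) (x 1)

instance (K : ℕ) : Nonempty (ModK K) := ⟨(0, true, 0)⟩

@[simp] lemma realize_oBF {K n : ℕ} (i j : Fin n) (v : Empty → ModK K) (xs : Fin n → ModK K) :
    (oBF i j).Realize v xs ↔ orel (xs i) (xs j) := by
  simp [oBF]
  rfl

@[simp] lemma realize_andAll {n : ℕ} {M : Type*} [L.Structure M]
    {l : List (L.BoundedFormula Empty n)} {v : Empty → M} {xs : Fin n → M} :
    (andAll l).Realize v xs ↔ ∀ φ ∈ l, φ.Realize v xs := by
  induction l with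
  | nil => simp [andAll]
  | cons φ l ih => simp [andAll, ih]

lemma modK_lam3 (K : ℕ) : ModK K ⊨ lam3 := by
  simp only [lam3, Sentence.Realize, realize_alls, realize_not, realize_oBF, orel]
  intro xs h
  exact h.2 rfl

lemma modK_lam4 (K : ℕ) : ModK K ⊨ lam4 := by
  simp only [lam4, Sentence.Realize, realize_alls, realize_imp, realize_oBF]
  rintro xs ⟨h1, h2⟩
  exact ⟨h1.symm, h2.symm⟩

lemma modK_lam5 (K : ℕ) : ModK K ⊨ lam5 := by
  simp only [lam5, Sentence.Realize, realize_alls, realize_ex, realize_oBF]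
  intro xs
  refine ⟨((xs 0).1, !(xs 0).2.1, 0), ?_⟩
  simp [orel, Fin.snoc]
  exact ⟨rfl, by show ¬ (xs 0).2.1 = !(xs 0).2.1; cases (xs 0).2.1 <;> decide⟩

lemma modK_lam6 (K : ℕ) : ModK K ⊨ lam6 := by
  simp only [lam6, Sentence.Realize, realize_alls, realize_imp,
    realize_inf, realize_oBF]
  rintro xs ⟨⟨⟨hxz1, hxz2⟩, ⟨hyz1, hyz2⟩⟩, ⟨hxt1, hxt2⟩⟩
  constructor
  · rw [hyz1, ← hxz1, hxt1]
  · have : (xs 1).2.1 = (xs 0).2.1 := by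
      rcases Bool.eq_or_eq_not (xs 1).2.1 (xs 0).2.1 with h | h
      · exact h
      · exfalso; apply hyz2; rw [h]
        cases hb : (xs 0).2.1 <;> cases hc : (xs 2).2.1 <;> simp_all
    rw [this]; exact hxt2

lemma modK_lam1 (K n : ℕ) : ModK K ⊨ lam1 n := by
  simp only [lam1, Sentence.Realize, realize_alls, realize_imp, realize_andAll, realize_inf,
    realize_ex, List.mem_map, List.mem_finRange, true_and, forall_exists_index,
    forall_apply_eq_imp_iff, realize_oBF, realize_not, realize_bdEqual, Term.realize_var,
    Sum.elim_inr, Fin.snoc_castSucc, Fin.snoc_last, Function.comp_apply, Function.comp]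
  intro xs _
  set N : ℕ := Finset.univ.sup (fun j : Fin (n+1) => (xs j).2.2) with hN
  refine ⟨((xs (Fin.last n)).1, !(xs (Fin.last n)).2.1, N + 1), ?_, rfl, Ne.symm (Bool.not_ne_self _)⟩
  intro i h
  have h2 : (xs i.castSucc).2.2 ≤ N := Finset.le_sup (f := fun j : Fin (n+1) => (xs j).2.2) (Finset.mem_univ _)
  rw [← h] at h2
  simp only [hN] at h2
  omega

lemma modK_lam2 (K n : ℕ) (hn : n < 2 * (K + 1)) : ModK K ⊨ lam2 n := by
  simp only [lam2, Sentence.Realize, realize_alls, realize_ex, realize_andAll, List.mem_map,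
    List.mem_finRange, true_and, forall_exists_index, forall_apply_eq_imp_iff, realize_not,
    realize_oBF, Fin.snoc_castSucc, Fin.snoc_last]
  intro xs
  have hns : ¬ Function.Surjective (fun i : Fin n => ((xs i).1, (xs i).2.1)) := by
    intro hs
    have := Fintype.card_le_of_surjective _ hs
    simp at this
    omega
  rw [Function.Surjective] at hns
  push_neg at hns
  obtain ⟨⟨a, c⟩, hp⟩ := hns
  refine ⟨(a, !c, 0), ?_⟩
  intro i hor
  rcases hor with ⟨h1, h2⟩
  apply hp i
  have : (xs i).2.1 = c := by
    cases hb : (xs i).2.1 <;> cases hc : c <;> simp_all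
  simp only [Prod.mk.injEq]
  exact ⟨h1.symm, this⟩

lemma modK_not_lam2 (K : ℕ) : ¬ (ModK K ⊨ lam2 (2 * (K + 1))) := by
  simp only [lam2, Sentence.Realize, realize_alls, realize_ex, realize_andAll, List.mem_map,
    List.mem_finRange, true_and, forall_exists_index, forall_apply_eq_imp_iff, realize_not,
    realize_oBF, Fin.snoc_castSucc, Fin.snoc_last]
  intro h
  obtain ⟨s, hs⟩ := h (fun i => (⟨i.val / 2, by omega⟩, decide (i.val % 2 = 1), 0))
  obtain ⟨q, b, m⟩ := s
  refine hs ⟨2 * q.val + (!b).toNat, by have := q.isLt; cases b <;> simp <;> omega⟩ ?_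
  constructor
  · apply Fin.ext
    simp only
    cases b <;> simp <;> omega
  · simp only
    cases b <;> simp <;> omega

lemma realize_andAll_sentence {M : Type*} [L.Structure M] {l : List L.Sentence} :
    M ⊨ (andAll l : L.Sentence) ↔ ∀ φ ∈ l, M ⊨ φ := by
  simp only [Sentence.Realize, Formula.Realize]
  exact realize_andAll

lemma modK_not_SAPP (K : ℕ) : ¬ (ModK K ⊨ SAPP) := by
  intro h
  exact modK_not_lam2 K (h.realize_of_mem (lam2 (2 * (K + 1)))
    (Or.inl (Or.inr ⟨2 * (K + 1), by omega, rfl⟩)))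

theorem statement_16 :
    ¬ ∃ Γ : Finset L.Sentence, ∀ (M : Type) [L.Structure M] [Nonempty M],
      ((M ⊨ (↑Γ : L.Theory)) ↔ M ⊨ SAPP) := by
  rintro ⟨Γ, h⟩
  set φ : L.Sentence := andAll Γ.toList with hφ
  -- every ModK K fails φ
  have hModφ : ∀ K : ℕ, ¬ (ModK K ⊨ φ) := by
    intro K hK
    apply modK_not_SAPP K
    rw [← h (ModK K)]
    rw [Theory.model_iff]
    intro γ hγ
    exact realize_andAll_sentence.1 hK γ (Finset.mem_toList.2 hγ)
  -- SAPP ∪ {∼φ} is finitely satisfiable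
  have hfs : (SAPP ∪ {Formula.not φ}).IsFinitelySatisfiable := by
    intro T0 hT0
    classical
    set f : L.Sentence → ℕ := fun s => if hs : ∃ n, s = lam2 n then hs.choose else 0 with hf
    set K : ℕ := T0.sup f with hK
    have hmod : ModK K ⊨ (↑T0 : L.Theory) := by
      rw [Theory.model_iff]
      intro s hs
      rcases hT0 hs with hsS | hsφ
      · rcases hsS with (⟨n, _, rfl⟩ | ⟨n, _, rfl⟩) | h3 | h4 | h5 | h6
        · exact modK_lam1 K n
        · have hex : ∃ m, lam2 n = lam2 m := ⟨n, rfl⟩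
          have hch : lam2 n = lam2 hex.choose := hex.choose_spec
          have hle : f (lam2 n) ≤ K := Finset.le_sup (Finset.mem_coe.1 hs)
          rw [hch]
          apply modK_lam2
          have : f (lam2 n) = hex.choose := by rw [hf]; simp only [dif_pos hex]
          omega
        · subst h3; exact modK_lam3 K
        · subst h4; exact modK_lam4 K
        · subst h5; exact modK_lam5 K
        · subst h6; exact modK_lam6 K
      · rw [Set.mem_singleton_iff] at hsφ
        subst hsφ
        rw [Sentence.realize_not]
        exact hModφ K
    haveI := hmod
    exact ⟨Theory.ModelType.of _ (ModK K)⟩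
  obtain ⟨N⟩ := Theory.isSatisfiable_iff_isFinitelySatisfiable.2 hfs
  have hun : (N : Type) ⊨ SAPP ∪ ({Formula.not φ} : L.Theory) := N.is_model
  rw [Theory.model_union_iff, Theory.model_singleton_iff, Sentence.realize_not] at hun
  apply hun.2
  have hΓ : (N : Type) ⊨ (↑Γ : L.Theory) := (h N).2 hun.1
  exact realize_andAll_sentence.2 fun γ hγ => hΓ.realize_of_mem γ (Finset.mem_toList.1 hγ)
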